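/- Let M be a matroid on a finite ground set E and let ≤ be a linear order on E with reverse order ≤ᵒᵖ (x ≤ᵒᵖ y iff y ≤ x). Then the lex-first basis of the dual matroid satisfies B_≤(M✶) = E ∖ B_{≤ᵒᵖ}(M). -/

import Mathlib

open Matroid

variable {α : Type*}

/-- `B₀` is the lex-first basis of the matroid `M` with respect to the order relation `le`:
it is a basis, and for every other basis `B'`, the `le`-least element of the symmetric
difference `B₀ ∆ B'` belongs to `B₀`. -/
def IsLexFirstBasis (M : Matroid α) (le : α → α → Prop) (B₀ : Set α) : Prop :=
  M.IsBase B₀ ∧ ∀ B', M.IsBase B' → B' ≠ B₀ →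
    ∀ m ∈ symmDiff B₀ B', (∀ x ∈ symmDiff B₀ B', le m x) → m ∈ B₀

/-- Deletion of a set `D` from the matroid `M`: the restriction of `M` to `M.E \ D`. -/
def mdelete (M : Matroid α) (D : Set α) : Matroid α := M ↾ (M.E \ D)

/-- Contraction of a set `C` in the matroid `M`, defined via duality:
`M / C = (M✶ \ C)✶`, a matroid on `M.E \ C`. -/
def mcontract (M : Matroid α) (C : Set α) : Matroid α := (M✶ ↾ (M.E \ C))✶

/-- Any nonempty subset of a finite type has a least element w.r.t. a linear order relation. -/
lemma exists_least {α : Type*} [Finite α] (le : α → α → Prop) (hlin : IsLinearOrder α le)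
    (S : Set α) (hS : S.Nonempty) : ∃ m ∈ S, ∀ x ∈ S, le m x := by
  haveI := hlin
  let r : α → α → Prop := fun a b => le a b ∧ a ≠ b
  haveI : IsIrrefl α r := ⟨fun a h => h.2 rfl⟩
  haveI : IsTrans α r := ⟨fun a b c hab hbc =>
    ⟨trans_of le hab.1 hbc.1, fun h => hbc.2 (antisymm_of le hbc.1 (h ▸ hab.1))⟩⟩
  obtain ⟨m, hm, hmin⟩ := (Finite.wellFounded_of_trans_of_irrefl r).has_min S hS
  refine ⟨m, hm, fun x hx => ?_⟩
  by_cases hxm : x = m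
  · exact hxm ▸ refl_of le m
  · rcases total_of le m x with h | h
    · exact h
    · exact absurd ⟨h, hxm⟩ (hmin x hx)

/-- The lex-first basis of the dual matroid w.r.t. a linear order `le` is the complement in
the ground set of the lex-first basis of `M` w.r.t. the reversed order. -/
theorem stmt12 [Fintype α] (M : Matroid α)
    (le : α → α → Prop) (hlin : IsLinearOrder α le)
    (B Bop : Set α)
    (hB : IsLexFirstBasis M✶ le B)
    (hBop : IsLexFirstBasis M (fun x y => le y x) Bop) :
    B = M.E \ Bop := by
  classical
  obtain ⟨hBbase, hBmin⟩ := hB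
  obtain ⟨hBopbase, hBopmin⟩ := hBop
  have hBE : B ⊆ M.E := hBbase.subset_ground
  have hBopE : Bop ⊆ M.E := hBopbase.subset_ground
  have hdual : M✶.IsBase (M.E \ Bop) := hBopbase.compl_isBase_dual
  by_contra hne
  set S := symmDiff B (M.E \ Bop) with hSdef
  have hSne : S.Nonempty := by
    rw [Set.nonempty_iff_ne_empty]
    intro h
    exact hne (symmDiff_eq_bot.1 h)
  obtain ⟨m, hmS, hmle⟩ := exists_least le hlin S hSne
  have hmB : m ∈ B := hBmin _ hdual (Ne.symm hne) m hmS hmle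
  have hmBop : m ∈ Bop := by
    rcases Set.mem_symmDiff.1 hmS with ⟨h1, h2⟩ | ⟨h1, h2⟩
    · by_contra h
      exact h2 ⟨hBE h1, h⟩
    · exact absurd hmB h2
  have hcompl : M.IsBase (M.E \ B) := hBbase.compl_isBase_of_dual
  have hmmem : m ∈ Bop \ (M.E \ B) := ⟨hmBop, fun h => h.2 hmB⟩
  obtain ⟨f, hf, hfbase⟩ := hBopbase.exchange hcompl hmmem
  have hfS : f ∈ S := Set.mem_symmDiff.2 (Or.inr ⟨⟨hf.1.1, hf.2⟩, hf.1.2⟩)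
  haveI := hlin
  have hfBop : f ∈ Bop := by
    refine hBopmin (insert f (Bop \ {m})) hfbase ?_ f ?_ ?_
    · intro h
      exact hf.2 (h ▸ Set.mem_insert f _)
    · exact Set.mem_symmDiff.2 (Or.inr ⟨Set.mem_insert f _, hf.2⟩)
    · intro x hx
      rcases Set.mem_symmDiff.1 hx with ⟨h1, h2⟩ | ⟨h1, h2⟩
      · have hxm : x = m := by
          by_contra h
          exact h2 (Set.mem_insert_of_mem _ ⟨h1, h⟩)
        subst hxm
        exact hmle f hfS
      · rcases Set.mem_insert_iff.1 h1 with hxf | hx'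
        · rw [hxf]
          exact refl_of le f
        · exact absurd hx'.1 h2
  exact hf.2 hfBop
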